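/- If X is a removable vertex in a MAG over vertices V, then for any two vertices Y, Z in the Markov boundary of X, each of Y and Z lies in the Markov boundary of the other; moreover, there exists a collider path between Y and Z passing only through vertices in Mb(X) ∪ {X}. -/

import Mathlib

/-- A mixed graph with directed (`dir x y` : x → y), bidirected and undirected edges. -/
structure MixedGraph (V : Type*) where
  dir : V → V → Prop
  bi : V → V → Prop
  und : V → V → Prop
  bi_symm : ∀ x y, bi x y → bi y x
  und_symm : ∀ x y, und x y → und y x

namespace MixedGraph

variable {V : Type*}

def adj (G : MixedGraph V) (x y : V) : Prop :=
  G.dir x y ∨ G.dir y x ∨ G.bi x y ∨ G.und x y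

/-- There is an arrowhead at `y` on the edge between `x` and `y`. -/
def head (G : MixedGraph V) (x y : V) : Prop := G.dir x y ∨ G.bi x y

def pa (G : MixedGraph V) (x : V) : Set V := {y | G.dir y x}
def child (G : MixedGraph V) (x : V) : Set V := {y | G.dir x y}
def nbr (G : MixedGraph V) (x : V) : Set V := {y | G.und x y}
def spouse (G : MixedGraph V) (x : V) : Set V := {y | G.bi x y}

/-- `x` is an ancestor of `y` (every vertex is an ancestor of itself). -/
def anc (G : MixedGraph V) (x y : V) : Prop := Relation.ReflTransGen G.dir x y

def ancSet (G : MixedGraph V) (S : Set V) : Set V := {x | ∃ y ∈ S, G.anc x y}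

/-- The set of descendants of `x` (including `x` itself). -/
def desc (G : MixedGraph V) (x : V) : Set V := {y | G.anc x y}

/-- A path, encoded as a duplicate-free list of at least two vertices with
consecutive vertices adjacent. -/
def IsPath (G : MixedGraph V) (p : List V) : Prop :=
  p.Chain' G.adj ∧ p.Nodup ∧ 2 ≤ p.length

def IsPathBetween (G : MixedGraph V) (p : List V) (x y : V) : Prop :=
  G.IsPath p ∧ p.head? = some x ∧ p.getLast? = some y

/-- The vertex at (internal) position `i` of `p` is a collider: both incident
path edges have an arrowhead at it. -/
def ColliderAt (G : MixedGraph V) (p : List V) (i : ℕ) : Prop :=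
  ∃ a v c, p[i-1]? = some a ∧ p[i]? = some v ∧ p[i+1]? = some c ∧
    G.head a v ∧ G.head c v

/-- A collider path: every non-endpoint vertex is a collider. -/
def IsColliderPath (G : MixedGraph V) (p : List V) : Prop :=
  G.IsPath p ∧ ∀ i, 1 ≤ i → i + 1 < p.length → G.ColliderAt p i

/-- `p` is an m-connecting path between `x` and `y` relative to `Z`. -/
def MConn (G : MixedGraph V) (p : List V) (x y : V) (Z : Set V) : Prop :=
  G.IsPathBetween p x y ∧
  ∀ i v, 1 ≤ i → i + 1 < p.length → p[i]? = some v →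
    (G.ColliderAt p i → v ∈ G.ancSet ({x, y} ∪ Z)) ∧
    (¬ G.ColliderAt p i → v ∉ Z)

/-- `Z` m-separates `x` and `y` in `G`. -/
def MSep (G : MixedGraph V) (x y : V) (Z : Set V) : Prop :=
  ∀ p, ¬ G.MConn p x y Z

/-- Induced subgraph over a set `S` of vertices. -/
def induce (G : MixedGraph V) (S : Set V) : MixedGraph V where
  dir x y := G.dir x y ∧ x ∈ S ∧ y ∈ S
  bi x y := G.bi x y ∧ x ∈ S ∧ y ∈ S
  und x y := G.und x y ∧ x ∈ S ∧ y ∈ S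
  bi_symm := fun x y h => ⟨G.bi_symm x y h.1, h.2.2, h.2.1⟩
  und_symm := fun x y h => ⟨G.und_symm x y h.1, h.2.2, h.2.1⟩

/-- `X` is removable in `G`: the induced subgraph on the remaining vertices
imposes exactly the same m-separation relations over them as `G`. -/
def Removable (G : MixedGraph V) (X : V) : Prop :=
  ∀ Y W : V, Y ≠ X → W ≠ X → Y ≠ W →
    ∀ Z : Set V, Z ⊆ {v | v ≠ X ∧ v ≠ Y ∧ v ≠ W} →
      (G.MSep Y W Z ↔ (G.induce {v | v ≠ X}).MSep Y W Z)

/-- Ancestral: no directed cycles, no almost directed cycles, and endpoints of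
undirected edges have no parents or spouses. -/
def Ancestral (G : MixedGraph V) : Prop :=
  (∀ x y, G.dir x y → ¬ G.anc y x) ∧
  (∀ x y, G.bi x y → ¬ G.anc y x) ∧
  (∀ x y, G.und x y → ∀ z, ¬ G.dir z x ∧ ¬ G.bi z x)

/-- A maximal ancestral graph: ancestral, and any two non-adjacent vertices are
m-separated by some set. -/
def IsMAG (G : MixedGraph V) : Prop :=
  G.Ancestral ∧
  ∀ x y, x ≠ y → ¬ G.adj x y →
    ∃ Z : Set V, Z ⊆ {v | v ≠ x ∧ v ≠ y} ∧ G.MSep x y Z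

/-- Markov boundary of `x`: the vertices with a collider path to `x`. -/
def Mb (G : MixedGraph V) (x : V) : Set V :=
  {y | ∃ p, G.IsColliderPath p ∧ p.head? = some y ∧ p.getLast? = some x}

/-- District of `x`: vertices joined to `x` by a path of bidirected edges. -/
def district (G : MixedGraph V) (x : V) : Set V :=
  {y | Relation.ReflTransGen G.bi x y}

/-- `Pa⁺(x) = Pa(x) ∪ Dis(x) ∪ Pa(Dis(x)) ∪ N(x)`. -/
def paPlus (G : MixedGraph V) (x : V) : Set V :=
  G.pa x ∪ G.district x ∪ (⋃ y ∈ G.district x, G.pa y) ∪ G.nbr x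

noncomputable def deltaPlus [Fintype V] (G : MixedGraph V) : ℕ :=
  Finset.univ.sup fun z : V => (G.paPlus z).ncard

/-- Condition 1 of the graphical characterization of removability. -/
def RemCond1 (G : MixedGraph V) (X : V) : Prop :=
  ∀ Y Z : V, G.adj X Y → Z ∈ G.child X ∪ G.nbr X → Z ≠ Y → G.adj Y Z

/-- Condition 2 of the graphical characterization of removability. -/
def RemCond2 (G : MixedGraph V) (X : V) : Prop :=
  ∀ (p : List V) (Y Z : V), G.IsColliderPath p → p.head? = some X →
    p.getLast? = some Y → Z ∉ p → (∀ v ∈ p.dropLast, G.dir v Z) → G.adj Y Z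

end MixedGraph

section Aux
namespace MixedGraph

variable {V : Type*} {M : MixedGraph V}

lemma adj_symm {x y : V} (h : M.adj x y) : M.adj y x := by
  rcases h with h | h | h | h
  · exact Or.inr (Or.inl h)
  · exact Or.inl h
  · exact Or.inr (Or.inr (Or.inl (M.bi_symm _ _ h)))
  · exact Or.inr (Or.inr (Or.inr (M.und_symm _ _ h)))

lemma head_adj {x y : V} (h : M.head x y) : M.adj x y := by
  rcases h with h | h
  · exact Or.inl h
  · exact Or.inr (Or.inr (Or.inl h))

lemma chain'_adj_iff (p : List V) :
    p.Chain' M.adj ↔ ∀ i a b, p[i]? = some a → p[i+1]? = some b → M.adj a b := by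
  rw [show p.Chain' M.adj ↔ p.IsChain M.adj from Iff.rfl, List.isChain_iff_getElem]
  constructor
  · intro H i a b ha hb
    obtain ⟨hb', hbe⟩ := List.getElem?_eq_some_iff.1 hb
    obtain ⟨ha', hae⟩ := List.getElem?_eq_some_iff.1 ha
    have := H i (by omega)
    simpa [List.get_eq_getElem, hae, hbe] using this
  · intro H i h
    have ha : p[i]? = some p[i] := List.getElem?_eq_getElem (by omega)
    have hb : p[i+1]? = some p[i+1] := List.getElem?_eq_getElem (by omega)
    simpa [List.get_eq_getElem] using H i _ _ ha hb

/-- A convenient characterization of collider paths, fully in terms of `getElem?`. -/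
lemma isColliderPath_iff (p : List V) :
    M.IsColliderPath p ↔
      2 ≤ p.length ∧ p.Nodup ∧
      (∀ i a b, p[i]? = some a → p[i+1]? = some b → M.adj a b) ∧
      (∀ i a v b, 1 ≤ i → p[i-1]? = some a → p[i]? = some v → p[i+1]? = some b →
        M.head a v ∧ M.head b v) := by
  constructor
  · rintro ⟨⟨hc, hnd, hlen⟩, hcol⟩
    refine ⟨hlen, hnd, (chain'_adj_iff p).1 hc, ?_⟩
    intro i a v b h1 ha hv hb
    obtain ⟨hb', hbe⟩ := List.getElem?_eq_some_iff.1 hb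
    obtain ⟨a', v', c', ha2, hv2, hc2, H1, H2⟩ := hcol i h1 hb'
    rw [ha] at ha2; rw [hv] at hv2; rw [hb] at hc2
    cases ha2; cases hv2; cases hc2
    exact ⟨H1, H2⟩
  · rintro ⟨hlen, hnd, hadj, hcol⟩
    refine ⟨⟨(chain'_adj_iff p).2 hadj, hnd, hlen⟩, ?_⟩
    intro i h1 h2
    have ha : p[i-1]? = some (p[i-1]'(by omega)) := List.getElem?_eq_getElem (by omega)
    have hv : p[i]? = some (p[i]'(by omega)) := List.getElem?_eq_getElem (by omega)
    have hb : p[i+1]? = some (p[i+1]'(by omega)) := List.getElem?_eq_getElem h2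
    obtain ⟨H1, H2⟩ := hcol i _ _ _ h1 ha hv hb
    exact ⟨_, _, _, ha, hv, hb, H1, H2⟩

lemma IsColliderPath.length {p : List V} (h : M.IsColliderPath p) : 2 ≤ p.length :=
  h.1.2.2

lemma IsColliderPath.nodup {p : List V} (h : M.IsColliderPath p) : p.Nodup :=
  h.1.2.1

lemma IsColliderPath.adj' {p : List V} (h : M.IsColliderPath p) :
    ∀ i a b, p[i]? = some a → p[i+1]? = some b → M.adj a b :=
  ((isColliderPath_iff p).1 h).2.2.1

lemma IsColliderPath.heads {p : List V} (h : M.IsColliderPath p) :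
    ∀ i a v b, 1 ≤ i → p[i-1]? = some a → p[i]? = some v → p[i+1]? = some b →
      M.head a v ∧ M.head b v :=
  ((isColliderPath_iff p).1 h).2.2.2

/-- Reversal of a collider path. -/
lemma IsColliderPath.reverse {p : List V} (h : M.IsColliderPath p) :
    M.IsColliderPath p.reverse := by
  obtain ⟨hlen, hnd, hadj, hcol⟩ := (isColliderPath_iff p).1 h
  rw [isColliderPath_iff]
  have L : p.reverse.length = p.length := p.length_reverse
  refine ⟨by omega, List.nodup_reverse.2 hnd, ?_, ?_⟩
  · intro i a b ha hb
    have hb' : i + 1 < p.length := by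
      have := (List.getElem?_eq_some_iff.1 hb).1; omega
    rw [List.getElem?_reverse (by omega)] at ha
    rw [List.getElem?_reverse (by omega)] at hb
    have e1 : p.length - 1 - i = (p.length - 1 - (i+1)) + 1 := by omega
    rw [e1] at ha
    exact M.adj_symm (hadj _ _ _ hb ha)
  · intro i a v b h1 ha hv hb
    have hb' : i + 1 < p.length := by
      have := (List.getElem?_eq_some_iff.1 hb).1; omega
    rw [List.getElem?_reverse (by omega)] at ha hv hb
    set j := p.length - 1 - i with hj
    have e1 : p.length - 1 - (i-1) = j + 1 := by omega
    have e2 : p.length - 1 - (i+1) = j - 1 := by omega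
    rw [e1] at ha; rw [e2] at hb
    have h1j : 1 ≤ j := by omega
    obtain ⟨H1, H2⟩ := hcol j b v a h1j hb hv ha
    exact ⟨H2, H1⟩

/-- A suffix of a collider path is a collider path. -/
lemma IsColliderPath.drop {p : List V} (h : M.IsColliderPath p) (n : ℕ)
    (hn : n + 2 ≤ p.length) : M.IsColliderPath (p.drop n) := by
  obtain ⟨hlen, hnd, hadj, hcol⟩ := (isColliderPath_iff p).1 h
  rw [isColliderPath_iff]
  refine ⟨by simp; omega, (List.drop_sublist n p).nodup hnd, ?_, ?_⟩
  · intro i a b ha hb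
    rw [List.getElem?_drop] at ha hb
    have e : n + (i+1) = (n+i) + 1 := by omega
    rw [e] at hb
    exact hadj _ _ _ ha hb
  · intro i a v b h1 ha hv hb
    rw [List.getElem?_drop] at ha hv hb
    have e1 : n + (i-1) = (n+i) - 1 := by omega
    have e2 : n + (i+1) = (n+i) + 1 := by omega
    rw [e1] at ha; rw [e2] at hb
    exact hcol (n+i) a v b (by omega) ha hv hb

/-- A prefix of a collider path is a collider path. -/
lemma IsColliderPath.take {p : List V} (h : M.IsColliderPath p) (j : ℕ)
    (hj1 : 1 ≤ j) (hj : j < p.length) : M.IsColliderPath (p.take (j+1)) := by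
  obtain ⟨hlen, hnd, hadj, hcol⟩ := (isColliderPath_iff p).1 h
  rw [isColliderPath_iff]
  have hL : (p.take (j+1)).length = j+1 := by
    rw [List.length_take]; omega
  refine ⟨by omega, (List.take_sublist _ p).nodup hnd, ?_, ?_⟩
  · intro i a b ha hb
    rw [List.getElem?_take] at ha hb
    split at ha; swap; · exact absurd ha (by simp)
    split at hb; swap; · exact absurd hb (by simp)
    exact hadj _ _ _ ha hb
  · intro i a v b h1 ha hv hb
    rw [List.getElem?_take] at ha hv hb
    split at ha; swap; · exact absurd ha (by simp)
    split at hv; swap; · exact absurd hv (by simp)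
    split at hb; swap; · exact absurd hb (by simp)
    exact hcol i a v b h1 ha hv hb

lemma head?_eq_getElem? (p : List V) : p.head? = p[0]? := List.head?_eq_getElem?

end MixedGraph
end Aux
section Aux2
namespace MixedGraph

variable {V : Type*} {M : MixedGraph V}

/-- Every vertex of a collider path ending at `X` lies in `Mb(X) ∪ {X}`. -/
lemma mem_insert_mb_of_colliderPath {p : List V} {X : V} (h : M.IsColliderPath p)
    (hl : p.getLast? = some X) : ∀ w ∈ p, w ∈ insert X (M.Mb X) := by
  intro w hw
  obtain ⟨i, hi, rfl⟩ := List.mem_iff_getElem.1 hw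
  have hlen := h.length
  rw [List.getLast?_eq_getElem?] at hl
  by_cases hi2 : i = p.length - 1
  · subst hi2
    rw [List.getElem?_eq_getElem hi] at hl
    rw [Option.some_inj.1 hl]
    exact Set.mem_insert _ _
  · have hi3 : i + 2 ≤ p.length := by omega
    refine Set.mem_insert_iff.2 (Or.inr ⟨p.drop i, h.drop i hi3, ?_, ?_⟩)
    · rw [List.head?_eq_getElem?, List.getElem?_drop]
      simp [List.getElem?_eq_getElem hi]
    · rw [List.getLast?_eq_getElem?, List.getElem?_drop]
      rw [← hl]
      congr 1
      simp; omega

lemma anc_induce_le {S : Set V} {a b : V} (h : (M.induce S).anc a b) : M.anc a b :=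
  Relation.ReflTransGen.mono (r := (M.induce S).dir) (p := M.dir) (fun _ _ hd => hd.1) a b h

lemma ancSet_mono {S T : Set V} (h : S ⊆ T) : M.ancSet S ⊆ M.ancSet T := by
  rintro x ⟨y, hy, hxy⟩; exact ⟨y, h hy, hxy⟩

lemma head_induce_iff {S : Set V} {a b : V} (ha : a ∈ S) (hb : b ∈ S) :
    (M.induce S).head a b ↔ M.head a b := by
  constructor
  · rintro (h | h)
    · exact Or.inl h.1
    · exact Or.inr h.1
  · rintro (h | h)
    · exact Or.inl ⟨h, ha, hb⟩
    · exact Or.inr ⟨h, ha, hb⟩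

lemma adj_induce_mem {S : Set V} {a b : V} (h : (M.induce S).adj a b) :
    M.adj a b ∧ a ∈ S ∧ b ∈ S := by
  rcases h with ⟨h, h1, h2⟩ | ⟨h, h1, h2⟩ | ⟨h, h1, h2⟩ | ⟨h, h1, h2⟩
  · exact ⟨Or.inl h, h1, h2⟩
  · exact ⟨Or.inr (Or.inl h), h2, h1⟩
  · exact ⟨Or.inr (Or.inr (Or.inl h)), h1, h2⟩
  · exact ⟨Or.inr (Or.inr (Or.inr h)), h1, h2⟩

/-- All vertices of an induced-graph path lie in `S`. -/
lemma mem_of_induced_path {S : Set V} {p : List V} (hc : p.Chain' (M.induce S).adj)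
    (hlen : 2 ≤ p.length) : ∀ w ∈ p, w ∈ S := by
  have H := (chain'_adj_iff (M := M.induce S) p).1 hc
  intro w hw
  obtain ⟨i, hi, rfl⟩ := List.mem_iff_getElem.1 hw
  by_cases h2 : i + 1 < p.length
  · have := H i _ _ (List.getElem?_eq_getElem hi) (List.getElem?_eq_getElem h2)
    exact (adj_induce_mem this).2.1
  · have h1 : 1 ≤ i := by omega
    have e1 : i - 1 + 1 = i := by omega
    have hb : i - 1 < p.length := by omega
    have := H (i-1) _ _ (List.getElem?_eq_getElem hb)
      (by rw [e1]; exact List.getElem?_eq_getElem hi)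
    exact (adj_induce_mem this).2.2

lemma colliderAt_induce_iff {S : Set V} {p : List V} (hp : ∀ w ∈ p, w ∈ S) (i : ℕ) :
    (M.induce S).ColliderAt p i ↔ M.ColliderAt p i := by
  have key : ∀ (j : ℕ) (a : V), p[j]? = some a → a ∈ S := by
    intro j a ha
    obtain ⟨h, rfl⟩ := List.getElem?_eq_some_iff.1 ha
    exact hp _ (List.getElem_mem h)
  constructor
  · rintro ⟨a, v, c, ha, hv, hc, H1, H2⟩
    exact ⟨a, v, c, ha, hv, hc,
      (head_induce_iff (key _ _ ha) (key _ _ hv)).1 H1,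
      (head_induce_iff (key _ _ hc) (key _ _ hv)).1 H2⟩
  · rintro ⟨a, v, c, ha, hv, hc, H1, H2⟩
    exact ⟨a, v, c, ha, hv, hc,
      (head_induce_iff (key _ _ ha) (key _ _ hv)).2 H1,
      (head_induce_iff (key _ _ hc) (key _ _ hv)).2 H2⟩

/-- m-separation in `M` implies m-separation in an induced subgraph. -/
lemma msep_induce_of_msep {S : Set V} {A B : V} {Z : Set V} (h : M.MSep A B Z) :
    (M.induce S).MSep A B Z := by
  intro p hconn
  obtain ⟨⟨⟨hc, hnd, hlen⟩, hhd, hlast⟩, hcond⟩ := hconn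
  have hmem : ∀ w ∈ p, w ∈ S := mem_of_induced_path hc hlen
  refine h p ⟨⟨⟨hc.imp (fun a b hab => (adj_induce_mem hab).1), hnd, hlen⟩, hhd, hlast⟩, ?_⟩
  intro i v h1 h2 hv
  obtain ⟨Hc, Hn⟩ := hcond i v h1 h2 hv
  have hca : (M.induce S).ColliderAt p i ↔ M.ColliderAt p i := colliderAt_induce_iff hmem i
  constructor
  · intro hcol
    have := Hc (hca.2 hcol)
    obtain ⟨y, hy, hxy⟩ := this
    exact ⟨y, hy, anc_induce_le hxy⟩
  · intro hncol
    exact Hn (fun hcol => hncol (hca.1 hcol))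

/-- In the induced graph with `X` removed, `X` may be dropped from any separating set. -/
lemma msep_induce_drop {X A B : V} {Z : Set V}
    (h : (M.induce {v | v ≠ X}).MSep A B Z) :
    (M.induce {v | v ≠ X}).MSep A B (Z \ {X}) := by
  set G := M.induce {v | v ≠ X} with hG
  intro p hconn
  obtain ⟨⟨⟨hc, hnd, hlen⟩, hhd, hlast⟩, hcond⟩ := hconn
  have hmem : ∀ w ∈ p, w ∈ {v | v ≠ X} := mem_of_induced_path hc hlen
  refine h p ⟨⟨⟨hc, hnd, hlen⟩, hhd, hlast⟩, ?_⟩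
  intro i v h1 h2 hv
  obtain ⟨Hc, Hn⟩ := hcond i v h1 h2 hv
  have hvX : v ≠ X := by
    obtain ⟨hb, rfl⟩ := List.getElem?_eq_some_iff.1 hv
    exact hmem _ (List.getElem_mem hb)
  constructor
  · intro hcol
    refine ancSet_mono ?_ (Hc hcol)
    intro w hw
    rcases hw with hw | hw
    · exact Or.inl hw
    · exact Or.inr hw.1
  · intro hncol hmemZ
    exact Hn hncol ⟨hmemZ, hvX⟩

end MixedGraph
end Aux2
section Aux3
namespace MixedGraph

variable {V : Type*} {M : MixedGraph V}

/-- Key principle: under removability of `X`, a path whose internal vertices are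
colliders that are ancestors of the endpoints (with the possible exception of a
non-collider occurrence of `X`) forces its endpoints to be adjacent. -/
lemma principleP (hM : M.IsMAG) (X : V) (hrem : M.Removable X)
    {U W : V} (hU : U ≠ X) (hW : W ≠ X) (hUW : U ≠ W)
    {R : List V} (hpath : M.IsPath R) (hhead : R.head? = some U)
    (hlast : R.getLast? = some W)
    (hint : ∀ i (v : V), 1 ≤ i → i + 1 < R.length → R[i]? = some v →
      (M.ColliderAt R i → v ∈ M.ancSet {U, W}) ∧ (¬ M.ColliderAt R i → v = X)) :
    M.adj U W := by
  by_contra hnadj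
  obtain ⟨S₀, hS₀, hsep⟩ := hM.2 U W hUW hnadj
  have hsep1 : (M.induce {v | v ≠ X}).MSep U W S₀ := msep_induce_of_msep hsep
  have hsep2 : (M.induce {v | v ≠ X}).MSep U W (S₀ \ {X}) := msep_induce_drop hsep1
  have hsub : (S₀ \ {X}) ⊆ {v | v ≠ X ∧ v ≠ U ∧ v ≠ W} := by
    rintro v ⟨hv, hvX⟩
    exact ⟨hvX, (hS₀ hv).1, (hS₀ hv).2⟩
  have hsepG : M.MSep U W (S₀ \ {X}) :=
    (hrem U W hU hW hUW (S₀ \ {X}) hsub).2 hsep2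
  refine hsepG R ⟨⟨hpath, hhead, hlast⟩, ?_⟩
  intro i v h1 h2 hv
  obtain ⟨Hc, Hn⟩ := hint i v h1 h2 hv
  constructor
  · intro hcol
    refine ancSet_mono ?_ (Hc hcol)
    intro w hw
    rcases hw with hw | hw
    · exact Or.inl (Or.inl hw)
    · exact Or.inl (Or.inr hw)
  · intro hncol
    rw [Hn hncol]
    simp

end MixedGraph
end Aux3
section Aux4
namespace MixedGraph

variable {V : Type*} {M : MixedGraph V}

/-- Splicing a prefix of `p` with a reversed prefix of `q` along a junction edge. -/
lemma splice {p q : List V} (hp : M.IsColliderPath p) (hq : M.IsColliderPath q)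
    (j k : ℕ) (hj : j < p.length) (hk : k < q.length)
    (hd : ∀ w ∈ p.take (j+1), w ∉ q.take (k+1))
    (ha : M.adj (p[j]'hj) (q[k]'hk))
    (h1 : 1 ≤ j → M.head (p[j-1]'(by omega)) (p[j]'hj) ∧ M.head (q[k]'hk) (p[j]'hj))
    (h2 : 1 ≤ k → M.head (q[k-1]'(by omega)) (q[k]'hk) ∧ M.head (p[j]'hj) (q[k]'hk)) :
    M.IsColliderPath (p.take (j+1) ++ (q.take (k+1)).reverse) ∧
    (p.take (j+1) ++ (q.take (k+1)).reverse).head? = p.head? ∧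
    (p.take (j+1) ++ (q.take (k+1)).reverse).getLast? = q.head? := by
  set cc := p.take (j+1) ++ (q.take (k+1)).reverse with hcc
  have lA : (p.take (j+1)).length = j + 1 := by rw [List.length_take]; omega
  have lB : ((q.take (k+1)).reverse).length = k + 1 := by
    rw [List.length_reverse, List.length_take]; omega
  have lc : cc.length = j + k + 2 := by rw [hcc, List.length_append, lA, lB]; omega
  -- getElem? computations
  have cep : ∀ (i : ℕ), i ≤ j → cc[i]? = p[i]? := by
    intro i hi
    rw [hcc, List.getElem?_append, lA, if_pos (by omega), List.getElem?_take, if_pos (by omega)]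
  have ceq : ∀ (i : ℕ), j < i → i ≤ j + k + 1 → cc[i]? = q[j+k+1-i]? := by
    intro i hi1 hi2
    rw [hcc, List.getElem?_append, lA, if_neg (by omega)]
    have hm : i - (j+1) < (q.take (k+1)).length := by rw [List.length_take]; omega
    rw [List.getElem?_reverse hm, List.length_take]
    rw [List.getElem?_take, if_pos (by omega)]
    congr 1
    omega
  have hpj : p[j]? = some (p[j]'hj) := List.getElem?_eq_getElem hj
  have hqk : q[k]? = some (q[k]'hk) := List.getElem?_eq_getElem hk
  obtain ⟨hplen, hpnd, hpadj, hpcol⟩ := (isColliderPath_iff p).1 hp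
  obtain ⟨hqlen, hqnd, hqadj, hqcol⟩ := (isColliderPath_iff q).1 hq
  refine ⟨?_, ?_, ?_⟩
  · rw [isColliderPath_iff]
    refine ⟨by omega, ?_, ?_, ?_⟩
    · rw [List.nodup_append]
      exact ⟨(List.take_sublist _ p).nodup hpnd,
        List.nodup_reverse.2 ((List.take_sublist _ q).nodup hqnd),
        fun a haA b haB hab => hd a haA (by rw [hab]; exact List.mem_reverse.1 haB)⟩
    · -- adjacency
      intro i a b hia hib
      have hib' : i + 1 < cc.length := (List.getElem?_eq_some_iff.1 hib).1
      rcases lt_trichotomy (i+1) (j+1) with h | h | h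
      · rw [cep i (by omega)] at hia
        rw [cep (i+1) (by omega)] at hib
        exact hpadj i a b hia hib
      · have hij : i = j := by omega
        rw [cep i (by omega), hij, hpj] at hia
        rw [ceq (i+1) (by omega) (by omega), (by omega : j + k + 1 - (i+1) = k), hqk] at hib
        cases hia; cases hib
        exact ha
      · have h' : j < i := by omega
        rw [ceq i (by omega) (by omega)] at hia
        rw [ceq (i+1) (by omega) (by omega)] at hib
        have e : j + k + 1 - i = (j + k + 1 - (i+1)) + 1 := by omega
        rw [e] at hia
        exact M.adj_symm (hqadj _ _ _ hib hia)
    · -- colliders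
      intro i a v b hi1 hia hiv hib
      have hib' : i + 1 < cc.length := (List.getElem?_eq_some_iff.1 hib).1
      rcases lt_trichotomy i j with h | h | h
      · rw [cep (i-1) (by omega)] at hia
        rw [cep i (by omega)] at hiv
        rw [cep (i+1) (by omega)] at hib
        exact hpcol i a v b hi1 hia hiv hib
      · -- i = j (so j ≥ 1)
        have hj1 : 1 ≤ j := by omega
        rw [cep (i-1) (by omega), (by omega : i - 1 = j - 1),
          List.getElem?_eq_getElem (by omega : j - 1 < p.length)] at hia
        rw [cep i (by omega), h, hpj] at hiv
        rw [ceq (i+1) (by omega) (by omega), (by omega : j + k + 1 - (i+1) = k), hqk] at hib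
        cases hia; cases hiv; cases hib
        exact ⟨(h1 hj1).1, (h1 hj1).2⟩
      · rcases eq_or_lt_of_le (by omega : j + 1 ≤ i) with h' | h'
        · -- i = j + 1 : junction on the q side
          have hk1' : 1 ≤ k := by omega
          rw [cep (i-1) (by omega : i - 1 ≤ j), (by omega : i - 1 = j), hpj] at hia
          rw [ceq i (by omega) (by omega), (by omega : j + k + 1 - i = k), hqk] at hiv
          rw [ceq (i+1) (by omega) (by omega), (by omega : j + k + 1 - (i+1) = k - 1),
            List.getElem?_eq_getElem (by omega : k - 1 < q.length)] at hib
          cases hia; cases hiv; cases hib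
          exact ⟨(h2 hk1').2, (h2 hk1').1⟩
        · -- i > j + 1 : interior of the q part
          have hm1 : 1 ≤ j + k + 1 - i := by omega
          rw [ceq (i-1) (by omega) (by omega)] at hia
          rw [ceq i (by omega) (by omega)] at hiv
          rw [ceq (i+1) (by omega) (by omega)] at hib
          rw [(by omega : j + k + 1 - (i-1) = (j + k + 1 - i) + 1)] at hia
          rw [(by omega : j + k + 1 - (i+1) = (j + k + 1 - i) - 1)] at hib
          have := hqcol (j+k+1-i) b v a hm1 hib hiv hia
          exact ⟨this.2, this.1⟩
  · rw [List.head?_eq_getElem?, List.head?_eq_getElem?, cep 0 (by omega)]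
  · rw [List.getLast?_eq_getElem?, List.head?_eq_getElem?, lc]
    rw [(by omega : j + k + 2 - 1 = j + k + 1), ceq (j+k+1) (by omega) le_rfl]
    congr 1
    omega

end MixedGraph
end Aux4
section Aux5
namespace MixedGraph

variable {V : Type*} {M : MixedGraph V}

lemma mem_take_iff' {p : List V} {n : ℕ} {w : V} :
    w ∈ p.take n ↔ ∃ (i : ℕ), i < n ∧ p[i]? = some w := by
  constructor
  · intro h
    obtain ⟨i, hi, rfl⟩ := List.mem_iff_getElem.1 h
    have hlen : (p.take n).length = min n p.length := List.length_take ..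
    refine ⟨i, by omega, ?_⟩
    have := List.getElem?_eq_getElem hi
    rwa [List.getElem?_take, if_pos (by omega)] at this
  · rintro ⟨i, hi, hw⟩
    have : (p.take n)[i]? = some w := by
      rw [List.getElem?_take, if_pos hi]; exact hw
    obtain ⟨h1, h2⟩ := List.getElem?_eq_some_iff.1 this
    exact h2 ▸ List.getElem_mem h1

lemma mem_dropLast_iff' {p : List V} {w : V} :
    w ∈ p.dropLast ↔ ∃ (i : ℕ), i < p.length - 1 ∧ p[i]? = some w := by
  rw [List.dropLast_eq_take]; exact mem_take_iff'


lemma getElem_idx {l : List V} {i j : ℕ} (h : i = j) (hj : j < l.length) :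
    l[i]'(h ▸ hj) = l[j]'hj := by subst h; rfl

/-- The main inductive construction for the hard case. -/
lemma main_ind (hM : M.IsMAG) (X : V) (hrem : M.Removable X)
    {p q : List V} (hp : M.IsColliderPath p) (hq : M.IsColliderPath q)
    (hp2 : 2 ≤ p.length) (hq2 : 2 ≤ q.length)
    (hpl : p.getLast? = some X) (hql : q.getLast? = some X)
    (hd : ∀ w ∈ p.dropLast, w ∉ q.dropLast)
    (hna : ¬ M.head (p[p.length-2]'(by omega)) X) :
    ∀ (n j k : ℕ) (hj : j ≤ p.length - 2) (hk : k ≤ q.length - 2), j + k = n →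
    (∀ (i : ℕ), j < i → (hi2 : i ≤ p.length - 2) →
        M.anc (p[i]'(by omega)) (p[j]'(by omega)) ∨ M.anc (p[i]'(by omega)) (q[k]'(by omega))) →
    (∀ (m : ℕ), k < m → (hm2 : m ≤ q.length - 2) →
        M.anc (q[m]'(by omega)) (p[j]'(by omega)) ∨ M.anc (q[m]'(by omega)) (q[k]'(by omega))) →
    ∃ c, M.IsColliderPath c ∧ c.head? = p.head? ∧ c.getLast? = q.head? ∧
      ∀ w ∈ c, w ∈ p ∨ w ∈ q := by
  obtain ⟨hplen, hpnd, hpadj, hpcol⟩ := (isColliderPath_iff p).1 hp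
  obtain ⟨hqlen, hqnd, hqadj, hqcol⟩ := (isColliderPath_iff q).1 hq
  have hplast : p[p.length - 1]? = some X := by
    rw [← List.getLast?_eq_getElem?]; exact hpl
  have hqlast : q[q.length - 1]? = some X := by
    rw [← List.getLast?_eq_getElem?]; exact hql
  have hXp : p[p.length - 1]'(by omega) = X := by
    have h2 := List.getElem?_eq_getElem (by omega : p.length - 1 < p.length)
    rw [h2] at hplast; exact Option.some_inj.1 hplast
  have hXq : q[q.length - 1]'(by omega) = X := by
    have h2 := List.getElem?_eq_getElem (by omega : q.length - 1 < q.length)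
    rw [h2] at hqlast; exact Option.some_inj.1 hqlast
  have hpXne : ∀ (i : ℕ) (h : i < p.length - 1), p[i]'(by omega) ≠ X := by
    intro i h he
    have : i = p.length - 1 := hpnd.getElem_inj_iff.1 (he.trans hXp.symm)
    omega
  have hqXne : ∀ (i : ℕ) (h : i < q.length - 1), q[i]'(by omega) ≠ X := by
    intro i h he
    have : i = q.length - 1 := hqnd.getElem_inj_iff.1 (he.trans hXq.symm)
    omega
  have hXqd : X ∉ q.dropLast := by
    intro hmem
    obtain ⟨i, hi, hw⟩ := mem_dropLast_iff'.1 hmem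
    obtain ⟨hb, hbe⟩ := List.getElem?_eq_some_iff.1 hw
    exact hqXne i hi hbe
  intro n
  induction n using Nat.strong_induction_on with
  | _ n IH =>
  intro j k hj hk hn hinvp hinvq
  have hjlt : j < p.length := by omega
  have hklt : k < q.length := by omega
  -- the auxiliary almost-collider path through X
  set R := p.drop j ++ ((q.drop k).dropLast).reverse with hR
  have lA : (p.drop j).length = p.length - j := by simp
  have lB : (((q.drop k).dropLast).reverse).length = q.length - k - 1 := by simp
  have lR : R.length = (p.length - j) + (q.length - k - 1) := by
    rw [hR, List.length_append, lA, lB]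
  have Rp : ∀ (i : ℕ), i < p.length - j → R[i]? = p[j+i]? := by
    intro i hi
    rw [hR, List.getElem?_append, lA, if_pos hi, List.getElem?_drop]
  have Rq : ∀ (i : ℕ), p.length - j ≤ i → i < R.length →
      R[i]? = q[q.length - 2 - (i - (p.length - j))]? := by
    intro i hi1 hi2
    rw [hR, List.getElem?_append, lA, if_neg (by omega)]
    have hm : i - (p.length - j) < ((q.drop k).dropLast).length := by
      rw [List.length_dropLast, List.length_drop]; omega
    rw [List.getElem?_reverse hm, List.length_dropLast, List.length_drop]
    rw [List.dropLast_eq_take, List.getElem?_take, if_pos (by simp; omega), List.getElem?_drop]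
    congr 1
    omega
  have Rhead : R.head? = p[j]? := by
    rw [List.head?_eq_getElem?, Rp 0 (by omega)]
    congr 1
  have Rlast : R.getLast? = q[k]? := by
    rw [List.getLast?_eq_getElem?, lR, Rq (p.length - j + (q.length - k - 1) - 1) (by omega) (by omega)]
    congr 1
    omega
  -- R is a path
  have Rchain : R.Chain' M.adj := by
    rw [chain'_adj_iff]
    intro i a b hia hib
    have hib' : i + 1 < R.length := (List.getElem?_eq_some_iff.1 hib).1
    rcases lt_trichotomy (i+1) (p.length - j) with h | h | h
    · rw [Rp i (by omega)] at hia
      rw [Rp (i+1) (by omega), (by omega : j + (i+1) = (j+i) + 1)] at hib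
      exact hpadj (j+i) a b hia hib
    · rw [Rp i (by omega), (by omega : j + i = p.length - 1), hplast] at hia
      rw [Rq (i+1) (by omega) (by omega), (by omega : q.length - 2 - (i+1 - (p.length - j)) = q.length - 2)] at hib
      have hbq : q[q.length - 2]? = some (q[q.length - 2]'(by omega)) :=
        List.getElem?_eq_getElem (by omega)
      rw [hbq] at hib
      cases hia; cases hib
      have := hqadj (q.length - 2) _ _ hbq (by rw [(by omega : q.length - 2 + 1 = q.length - 1)]; exact hqlast)
      exact M.adj_symm (hXq ▸ this)
    · rw [Rq i (by omega) (by omega)] at hia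
      rw [Rq (i+1) (by omega) (by omega)] at hib
      rw [(by omega : q.length - 2 - (i - (p.length - j)) = (q.length - 2 - (i + 1 - (p.length - j))) + 1)] at hia
      exact M.adj_symm (hqadj _ _ _ hib hia)
  have Rnodup : R.Nodup := by
    rw [hR, List.nodup_append]
    refine ⟨(List.drop_sublist _ _).nodup hpnd,
      List.nodup_reverse.2 ((List.dropLast_sublist _).nodup ((List.drop_sublist _ _).nodup hqnd)), ?_⟩
    intro w hwA w' hwB hwe
    rw [← hwe] at hwB
    have hwB' : w ∈ q.dropLast := by
      rw [List.mem_reverse] at hwB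
      obtain ⟨m, hm, rfl⟩ := List.mem_iff_getElem.1 hwB
      have hmlen : m < q.length - k - 1 := by
        have := hm; rw [List.length_dropLast, List.length_drop] at this; omega
      have : ((q.drop k).dropLast)[m]? = q[k+m]? := by
        rw [List.dropLast_eq_take, List.getElem?_take, if_pos (by simp; omega), List.getElem?_drop]
      refine mem_dropLast_iff'.2 ⟨k+m, by omega, ?_⟩
      rw [← this]
      exact List.getElem?_eq_getElem hm
    obtain ⟨i, hi, rfl⟩ := List.mem_iff_getElem.1 hwA
    have hilen : i < p.length - j := by have := hi; rw [List.length_drop] at this; omega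
    have hieq : (p.drop j)[i]? = p[j+i]? := List.getElem?_drop ..
    rw [List.getElem?_eq_getElem hi] at hieq
    by_cases hlast : j + i = p.length - 1
    · have hX2 : p[j+i]? = some X := by rw [hlast]; exact hplast
      have heq : (List.drop j p)[i] = X := Option.some_inj.1 (hieq.trans hX2)
      rw [heq] at hwB'
      exact hXqd hwB'
    · refine hd _ ?_ hwB'
      exact mem_dropLast_iff'.2 ⟨j+i, by omega, hieq.symm⟩
  have RisPath : M.IsPath R := ⟨Rchain, Rnodup, by omega⟩
  -- endpoints of R
  have hpj : p[j]? = some (p[j]'hjlt) := List.getElem?_eq_getElem hjlt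
  have hqk : q[k]? = some (q[k]'hklt) := List.getElem?_eq_getElem hklt
  have hUX : p[j]'hjlt ≠ X := hpXne j (by omega)
  have hWX : q[k]'hklt ≠ X := hqXne k (by omega)
  have hpjd : p[j]'hjlt ∈ p.dropLast := mem_dropLast_iff'.2 ⟨j, by omega, hpj⟩
  have hqkd : q[k]'hklt ∈ q.dropLast := mem_dropLast_iff'.2 ⟨k, by omega, hqk⟩
  have hUW : p[j]'hjlt ≠ q[k]'hklt := by
    intro he
    exact hd _ hpjd (he ▸ hqkd)
  -- the collider/ancestor conditions along R
  have hint : ∀ (i : ℕ) (v : V), 1 ≤ i → i + 1 < R.length → R[i]? = some v →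
      (M.ColliderAt R i → v ∈ M.ancSet {p[j]'hjlt, q[k]'hklt}) ∧
      (¬ M.ColliderAt R i → v = X) := by
    intro i v h1 h2 hv
    rcases lt_trichotomy i (p.length - j - 1) with hzone | hzone | hzone
    · -- interior of the p part
      rw [Rp i (by omega)] at hv
      obtain ⟨hb, hbe⟩ := List.getElem?_eq_some_iff.1 hv
      have hcolp := hpcol (j+i) (p[j+i-1]'(by omega)) v (p[j+i+1]'(by omega)) (by omega)
        (List.getElem?_eq_getElem (by omega)) hv (List.getElem?_eq_getElem (by omega))
      have hcoll : M.ColliderAt R i := by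
        refine ⟨_, v, _, ?_, ?_, ?_, hcolp.1, hcolp.2⟩
        · rw [Rp (i-1) (by omega), (by omega : j + (i-1) = j+i-1)]
          exact List.getElem?_eq_getElem (by omega)
        · rw [Rp i (by omega)]; exact hv
        · rw [Rp (i+1) (by omega), (by omega : j + (i+1) = j+i+1)]
          exact List.getElem?_eq_getElem (by omega)
      refine ⟨fun _ => ?_, fun hn => absurd hcoll hn⟩
      rcases hinvp (j+i) (by omega) (by omega) with h | h
      · exact ⟨p[j]'hjlt, Set.mem_insert _ _, hbe ▸ h⟩
      · exact ⟨q[k]'hklt, Set.mem_insert_of_mem _ rfl, hbe ▸ h⟩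
    · -- the position of X
      rw [Rp i (by omega), (by omega : j + i = p.length - 1), hplast] at hv
      have hvX : v = X := (Option.some_inj.1 hv).symm
      have hnc : ¬ M.ColliderAt R i := by
        rintro ⟨a, v', c, ha, hv', hc, H1, H2⟩
        rw [Rp i (by omega), (by omega : j + i = p.length - 1), hplast] at hv'
        rw [Rp (i-1) (by omega), (by omega : j + (i-1) = p.length - 2)] at ha
        rw [List.getElem?_eq_getElem (by omega : p.length - 2 < p.length)] at ha
        cases ha
        cases hv'
        exact hna H1
      exact ⟨fun hcol => absurd hcol hnc, fun _ => hvX⟩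
    · -- interior of the q part
      have him : p.length - j ≤ i := by omega
      rw [Rq i him (by omega)] at hv
      set m := q.length - 2 - (i - (p.length - j)) with hm
      have hmk : k < m := by omega
      have hm2 : m ≤ q.length - 2 := by omega
      obtain ⟨hb, hbe⟩ := List.getElem?_eq_some_iff.1 hv
      have hcolq := hqcol m (q[m-1]'(by omega)) v (q[m+1]'(by omega)) (by omega)
        (List.getElem?_eq_getElem (by omega)) hv (List.getElem?_eq_getElem (by omega))
      have hcoll : M.ColliderAt R i := by
        refine ⟨_, v, _, ?_, ?_, ?_, hcolq.2, hcolq.1⟩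
        · -- R[i-1]? = some q[m+1]
          rcases eq_or_lt_of_le (by omega : p.length - j - 1 ≤ i - 1) with he | hlt
          · rw [Rp (i-1) (by omega), (by omega : j + (i-1) = p.length - 1), hplast]
            have hx : q[m+1]'(by omega) = X :=
              (getElem_idx (by omega : m + 1 = q.length - 1) (by omega)).trans hXq
            rw [hx]
          · rw [Rq (i-1) (by omega) (by omega),
              (by omega : q.length - 2 - (i-1 - (p.length - j)) = m + 1)]
            exact List.getElem?_eq_getElem (by omega)
        · rw [Rq i him (by omega), ← hm]; exact hv
        · rw [Rq (i+1) (by omega) (by omega),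
            (by omega : q.length - 2 - (i+1 - (p.length - j)) = m - 1)]
          exact List.getElem?_eq_getElem (by omega)
      refine ⟨fun _ => ?_, fun hn => absurd hcoll hn⟩
      rcases hinvq m hmk hm2 with h | h
      · exact ⟨p[j]'hjlt, Set.mem_insert _ _, hbe ▸ h⟩
      · exact ⟨q[k]'hklt, Set.mem_insert_of_mem _ rfl, hbe ▸ h⟩
  have hadj : M.adj (p[j]'hjlt) (q[k]'hklt) := by
    refine principleP hM X hrem hUX hWX hUW RisPath ?_ ?_ hint
    · rw [Rhead]; exact hpj
    · rw [Rlast]; exact hqk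
  -- facts about take-prefixes being inside dropLast
  have hdtake : ∀ w ∈ p.take (j+1), w ∉ q.take (k+1) := by
    intro w hw hw2
    obtain ⟨i, hi, hiw⟩ := mem_take_iff'.1 hw
    obtain ⟨i2, hi2, hiw2⟩ := mem_take_iff'.1 hw2
    exact hd w (mem_dropLast_iff'.2 ⟨i, by omega, hiw⟩)
      (mem_dropLast_iff'.2 ⟨i2, by omega, hiw2⟩)
  have hmemfin : ∀ (c : List V), c = p.take (j+1) ++ (q.take (k+1)).reverse →
      ∀ w ∈ c, w ∈ p ∨ w ∈ q := by
    rintro c rfl w hw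
    rcases List.mem_append.1 hw with h | h
    · exact Or.inl ((List.take_sublist _ _).subset h)
    · exact Or.inr ((List.take_sublist _ _).subset (List.mem_reverse.1 h))
  have hpheads : 1 ≤ j → M.head (p[j-1]'(by omega)) (p[j]'hjlt) := by
    intro h1
    exact (hpcol j _ _ (p[j+1]'(by omega)) h1 (List.getElem?_eq_getElem (by omega)) hpj
      (List.getElem?_eq_getElem (by omega))).1
  have hqheads : 1 ≤ k → M.head (q[k-1]'(by omega)) (q[k]'hklt) := by
    intro h1
    exact (hqcol k _ _ (q[k+1]'(by omega)) h1 (List.getElem?_eq_getElem (by omega)) hqk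
      (List.getElem?_eq_getElem (by omega))).1
  -- case analysis on the junction edge
  by_cases hh1 : M.head (q[k]'hklt) (p[j]'hjlt)
  · by_cases hh2 : M.head (p[j]'hjlt) (q[k]'hklt)
    · -- double-headed: splice
      obtain ⟨hcp, hch, hcl⟩ := splice hp hq j k hjlt hklt hdtake hadj
        (fun h1 => ⟨hpheads h1, hh1⟩) (fun h1 => ⟨hqheads h1, hh2⟩)
      exact ⟨_, hcp, hch, hcl, hmemfin _ rfl⟩
    · -- head at p[j], tail at q[k] : descend on the q side
      have hdir : M.dir (q[k]'hklt) (p[j]'hjlt) := by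
        rcases hh1 with h | h
        · exact h
        · exact absurd (Or.inr (M.bi_symm _ _ h)) hh2
      by_cases hk0 : k = 0
      · subst hk0
        obtain ⟨hcp, hch, hcl⟩ := splice hp hq j 0 hjlt hklt hdtake hadj
          (fun h1 => ⟨hpheads h1, hh1⟩) (fun h1 => absurd h1 (by omega))
        exact ⟨_, hcp, hch, hcl, hmemfin _ rfl⟩
      · have hanc : M.anc (q[k]'hklt) (p[j]'hjlt) := Relation.ReflTransGen.single hdir
        refine IH (j + (k-1)) (by omega) j (k-1) hj (by omega) rfl ?_ ?_
        · intro i hji hi2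
          rcases hinvp i hji hi2 with h | h
          · exact Or.inl h
          · exact Or.inl (h.trans hanc)
        · intro m hkm hm2
          rcases eq_or_lt_of_le (by omega : k ≤ m) with he | hlt
          · refine Or.inl ?_
            have : q[m]'(by omega) = q[k]'hklt := by congr 1; omega
            rw [this]; exact hanc
          · rcases hinvq m hlt hm2 with h | h
            · exact Or.inl h
            · exact Or.inl (h.trans hanc)
  · -- tail at p[j]
    by_cases hj0 : j = 0
    · by_cases hdir0 : M.dir (p[j]'hjlt) (q[k]'hklt)
      · obtain ⟨hcp, hch, hcl⟩ := splice hp hq j k hjlt hklt hdtake hadj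
          (fun h1 => absurd h1 (by omega)) (fun h1 => ⟨hqheads h1, Or.inl hdir0⟩)
        exact ⟨_, hcp, hch, hcl, hmemfin _ rfl⟩
      · rcases hadj with h | h | h | h
        · exact absurd h hdir0
        · exact absurd (Or.inl h) hh1
        · exact absurd (Or.inr (M.bi_symm _ _ h)) hh1
        · -- undirected edge
          by_cases hk0 : k = 0
          · subst hk0
            obtain ⟨hcp, hch, hcl⟩ := splice hp hq j 0 hjlt hklt hdtake
              (Or.inr (Or.inr (Or.inr h)))
              (fun h1 => absurd h1 (by omega)) (fun h1 => absurd h1 (by omega))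
            exact ⟨_, hcp, hch, hcl, hmemfin _ rfl⟩
          · exfalso
            have hund := M.und_symm _ _ h
            have := (hM.1.2.2 (q[k]'hklt) (p[j]'hjlt) hund (q[k-1]'(by omega)))
            rcases hqheads (by omega) with hh | hh
            · exact this.1 hh
            · exact this.2 hh
    · have hdirpq : M.dir (p[j]'hjlt) (q[k]'hklt) := by
        rcases hadj with h | h | h | h
        · exact h
        · exact absurd (Or.inl h) hh1
        · exact absurd (Or.inr (M.bi_symm _ _ h)) hh1
        · exfalso
          have := (hM.1.2.2 (p[j]'hjlt) (q[k]'hklt) h (p[j-1]'(by omega)))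
          rcases hpheads (by omega) with hh | hh
          · exact this.1 hh
          · exact this.2 hh
      have hanc : M.anc (p[j]'hjlt) (q[k]'hklt) := Relation.ReflTransGen.single hdirpq
      refine IH ((j-1) + k) (by omega) (j-1) k (by omega) hk rfl ?_ ?_
      · intro i hji hi2
        rcases eq_or_lt_of_le (by omega : j ≤ i) with he | hlt
        · refine Or.inr ?_
          have : p[i]'(by omega) = p[j]'hjlt := by congr 1; omega
          rw [this]; exact hanc
        · rcases hinvp i hlt hi2 with h | h
          · exact Or.inr (h.trans hanc)
          · exact Or.inr h
      · intro m hkm hm2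
        rcases hinvq m hkm hm2 with h | h
        · exact Or.inr (h.trans hanc)
        · exact Or.inr h

end MixedGraph
end Aux5
open MixedGraph in
/-- if `X` is removable in a MAG, then any two members `Y, Z` of
the Markov boundary of `X` lie in each other's Markov boundary, and there is a
collider path between them passing only through vertices of `Mb(X) ∪ {X}`. -/
theorem stmt5 {V : Type*} (M : MixedGraph V) (hM : M.IsMAG) (X : V)
    (hrem : M.Removable X) (Y Z : V) (hY : Y ∈ M.Mb X) (hZ : Z ∈ M.Mb X)
    (hYZ : Y ≠ Z) :
    Z ∈ M.Mb Y ∧ Y ∈ M.Mb Z ∧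
      ∃ p : List V, M.IsColliderPath p ∧ p.head? = some Y ∧
        p.getLast? = some Z ∧ ∀ v ∈ p, v ∈ insert X (M.Mb X) := by
  classical
  obtain ⟨p, hp, hph, hpl⟩ := hY
  obtain ⟨q, hq, hqh, hql⟩ := hZ
  have hp2 : 2 ≤ p.length := hp.length
  have hq2 : 2 ≤ q.length := hq.length
  have hpnd : p.Nodup := hp.nodup
  have hqnd : q.Nodup := hq.nodup
  have hpadj := hp.adj'
  have hqadj := hq.adj'
  have hpcol := hp.heads
  have hqcol := hq.heads
  have hplast : p[p.length - 1]? = some X := by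
    rw [← List.getLast?_eq_getElem?]; exact hpl
  have hqlast : q[q.length - 1]? = some X := by
    rw [← List.getLast?_eq_getElem?]; exact hql
  have hXp : p[p.length - 1]'(by omega) = X := by
    have h2 := List.getElem?_eq_getElem (by omega : p.length - 1 < p.length)
    rw [h2] at hplast; exact Option.some_inj.1 hplast
  have hXq : q[q.length - 1]'(by omega) = X := by
    have h2 := List.getElem?_eq_getElem (by omega : q.length - 1 < q.length)
    rw [h2] at hqlast; exact Option.some_inj.1 hqlast
  have hplast : p[p.length - 1]? = some X := by
    rw [← List.getLast?_eq_getElem?]; exact hpl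
  have hqlast : q[q.length - 1]? = some X := by
    rw [← List.getLast?_eq_getElem?]; exact hql
  have hpXne : ∀ (i : ℕ) (h : i < p.length - 1), p[i]'(by omega) ≠ X := by
    intro i h he
    have : i = p.length - 1 := hpnd.getElem_inj_iff.1 (he.trans hXp.symm)
    omega
  have hqXne : ∀ (i : ℕ) (h : i < q.length - 1), q[i]'(by omega) ≠ X := by
    intro i h he
    have : i = q.length - 1 := hqnd.getElem_inj_iff.1 (he.trans hXq.symm)
    omega
  have hXqd : X ∉ q.dropLast := by
    intro hmem
    obtain ⟨i, hi, hw⟩ := mem_dropLast_iff'.1 hmem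
    obtain ⟨hb, hbe⟩ := List.getElem?_eq_some_iff.1 hw
    exact hqXne i hi hbe
  have hmp := mem_insert_mb_of_colliderPath hp hpl
  have hmq := mem_insert_mb_of_colliderPath hq hql
  -- final packaging
  have hfin : ∀ c : List V, M.IsColliderPath c → c.head? = some Y → c.getLast? = some Z →
      (∀ w ∈ c, w ∈ p ∨ w ∈ q) →
      Z ∈ M.Mb Y ∧ Y ∈ M.Mb Z ∧
        ∃ r : List V, M.IsColliderPath r ∧ r.head? = some Y ∧
          r.getLast? = some Z ∧ ∀ v ∈ r, v ∈ insert X (M.Mb X) := by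
    intro c hc hch hcl hmem
    have hmem' : ∀ w ∈ c, w ∈ insert X (M.Mb X) := by
      intro w hw
      rcases hmem w hw with h | h
      · exact hmp w h
      · exact hmq w h
    refine ⟨⟨c.reverse, hc.reverse, ?_, ?_⟩, ⟨c, hc, hch, hcl⟩, ⟨c, hc, hch, hcl, hmem'⟩⟩
    · rw [List.head?_reverse]; exact hcl
    · rw [List.getLast?_reverse]; exact hch
  -- the first vertex of p that lies on q
  have hex : ∃ jj : ℕ, ∃ v : V, p[jj]? = some v ∧ v ∈ q := by
    refine ⟨p.length - 1, X, hplast, ?_⟩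
    rw [← hXq]; exact List.getElem_mem _
  set j := Nat.find hex with hjdef
  obtain ⟨v, hjv, hvq⟩ := Nat.find_spec hex
  rw [← hjdef] at hjv
  have hjlt : j < p.length := (List.getElem?_eq_some_iff.1 hjv).1
  have hjmin : ∀ (i : ℕ) (w : V), i < j → p[i]? = some w → w ∉ q := by
    intro i w hi hw hwq
    exact Nat.find_min hex hi ⟨w, hw, hwq⟩
  have he_pj : p[j]'hjlt = v := by
    have := List.getElem?_eq_getElem hjlt
    rw [this] at hjv
    exact Option.some_inj.1 hjv
  by_cases hvX : v = X
  · -- p and q intersect only at X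
    rw [hvX] at hjv he_pj
    have hjval : j = p.length - 1 := by
      by_contra hne
      exact hpXne j (by omega) he_pj
    have hdisj : ∀ w ∈ p.dropLast, w ∉ q.dropLast := by
      intro w hw hw2
      obtain ⟨i, hi, hiw⟩ := mem_dropLast_iff'.1 hw
      exact hjmin i w (by omega) hiw ((List.dropLast_sublist q).subset hw2)
    by_cases hfa : M.head (p[p.length - 2]'(by omega)) X
    · by_cases hfb : M.head (q[q.length - 2]'(by omega)) X
      · -- splice through X
        have hklt : q.length - 2 < q.length := by omega
        have hdt : ∀ w ∈ p.take (p.length - 1 + 1), w ∉ q.take (q.length - 2 + 1) := by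
          intro w hw hw2
          obtain ⟨i, hi, hiw⟩ := mem_take_iff'.1 hw
          obtain ⟨i2, hi2, hiw2⟩ := mem_take_iff'.1 hw2
          by_cases hilast : i = p.length - 1
          · have : w = X := by
              rw [hilast] at hiw
              rw [hiw] at hplast
              exact Option.some_inj.1 hplast
            subst this
            exact hXqd (mem_dropLast_iff'.2 ⟨i2, by omega, hiw2⟩)
          · have hilt : i < p.length := (List.getElem?_eq_some_iff.1 hiw).1
            exact hjmin i w (by omega) hiw ((List.take_sublist _ _).subset hw2)
        have hadjX : M.adj (p[p.length - 1]'(by omega)) (q[q.length - 2]'hklt) := by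
          have h1 := List.getElem?_eq_getElem hklt
          have := hqadj (q.length - 2) _ _ h1
            (by rw [(by omega : q.length - 2 + 1 = q.length - 1)]; exact hqlast)
          rw [hXp]
          exact M.adj_symm this
        have hsp := splice hp hq (p.length - 1) (q.length - 2) (by omega) hklt hdt hadjX
          (fun h1 => by
            constructor
            · have e1 : p[p.length - 1 - 1]'(by omega) = p[p.length - 2]'(by omega) :=
                getElem_idx (by omega : p.length - 1 - 1 = p.length - 2) (by omega)
              rw [e1, hXp]; exact hfa
            · rw [hXp]; exact hfb)
          (fun h1 => by
            have h2 := hqcol (q.length - 2) (q[q.length - 2 - 1]'(by omega)) (q[q.length - 2]'hklt)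
              (q[q.length - 2 + 1]'(by omega)) h1 (List.getElem?_eq_getElem (by omega))
              (List.getElem?_eq_getElem hklt) (List.getElem?_eq_getElem (by omega))
            refine ⟨h2.1, ?_⟩
            have hx : q[q.length - 2 + 1]'(by omega) = X :=
              (getElem_idx (by omega : q.length - 2 + 1 = q.length - 1) (by omega)).trans hXq
            have := h2.2
            rwa [hx, ← hXp] at this)
        obtain ⟨hcp, hch, hcl⟩ := hsp
        refine hfin _ hcp (by rw [hch]; exact hph) (by rw [hcl]; exact hqh) ?_
        intro w hw
        rcases List.mem_append.1 hw with h | h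
        · exact Or.inl ((List.take_sublist _ _).subset h)
        · exact Or.inr ((List.take_sublist _ _).subset (List.mem_reverse.1 h))
      · -- hard case, q-side tail at X : swap roles
        have hdisj' : ∀ w ∈ q.dropLast, w ∉ p.dropLast := fun w hw hw2 => hdisj w hw2 hw
        obtain ⟨c, hcp, hch, hcl, hcm⟩ := main_ind hM X hrem hq hp hq2 hp2 hql hpl hdisj' hfb
          ((q.length - 2) + (p.length - 2)) (q.length - 2) (p.length - 2) le_rfl le_rfl rfl
          (fun i h1 h2 => (by omega : False).elim)
          (fun m h1 h2 => (by omega : False).elim)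
        refine hfin c.reverse hcp.reverse ?_ ?_ ?_
        · rw [List.head?_reverse, hcl]; exact hph
        · rw [List.getLast?_reverse, hch]; exact hqh
        · intro w hw
          rcases hcm w (List.mem_reverse.1 hw) with h | h
          · exact Or.inr h
          · exact Or.inl h
    · -- hard case, p-side tail at X
      obtain ⟨c, hcp, hch, hcl, hcm⟩ := main_ind hM X hrem hp hq hp2 hq2 hpl hql hdisj hfa
        ((p.length - 2) + (q.length - 2)) (p.length - 2) (q.length - 2) le_rfl le_rfl rfl
        (fun i h1 h2 => (by omega : False).elim)
        (fun m h1 h2 => (by omega : False).elim)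
      exact hfin c hcp (by rw [hch]; exact hph) (by rw [hcl]; exact hqh) hcm
  · -- p and q share the vertex v ≠ X
    have hjlt2 : j < p.length - 1 := by
      rcases lt_or_ge j (p.length - 1) with h | h
      · exact h
      · exfalso
        have : j = p.length - 1 := by omega
        rw [this] at hjv
        rw [hplast] at hjv
        exact hvX (Option.some_inj.1 hjv).symm
    have hext : ∃ tt : ℕ, q[tt]? = some v := by
      obtain ⟨s, hs, hse⟩ := List.mem_iff_getElem.1 hvq
      exact ⟨s, by rw [List.getElem?_eq_getElem hs, hse]⟩
    set t := Nat.find hext with htdef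
    have htv : q[t]? = some v := by rw [htdef]; exact Nat.find_spec hext
    have htlt : t < q.length := (List.getElem?_eq_some_iff.1 htv).1
    have htmin : ∀ (s : ℕ), s < t → q[s]? ≠ some v := fun s hs => Nat.find_min hext hs
    have htlt2 : t < q.length - 1 := by
      rcases lt_or_ge t (q.length - 1) with h | h
      · exact h
      · exfalso
        have : t = q.length - 1 := by omega
        rw [this, hqlast] at htv
        exact hvX (Option.some_inj.1 htv).symm
    have he_qt : q[t]'htlt = v := by
      have := List.getElem?_eq_getElem htlt
      rw [this] at htv
      exact Option.some_inj.1 htv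
    by_cases ht0 : t = 0
    · -- v = Z : a prefix of p works
      have hvZ : v = Z := by
        rw [ht0] at htv
        rw [← List.head?_eq_getElem?, hqh] at htv
        exact (Option.some_inj.1 htv).symm
      have hj1 : 1 ≤ j := by
        by_contra h
        have hj0 : j = 0 := by omega
        rw [hj0, ← List.head?_eq_getElem?, hph] at hjv
        exact hYZ ((Option.some_inj.1 hjv).trans hvZ)
      refine hfin (p.take (j+1)) (hp.take j hj1 hjlt) ?_ ?_ ?_
      · rw [List.head?_eq_getElem?, List.getElem?_take, if_pos (by omega), ← List.head?_eq_getElem?]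
        exact hph
      · rw [List.getLast?_eq_getElem?, List.length_take,
          (by omega : min (j+1) p.length - 1 = j), List.getElem?_take, if_pos (by omega), hjv, hvZ]
      · intro w hw
        exact Or.inl ((List.take_sublist _ _).subset hw)
    · -- splice at the shared vertex
      have ht1 : 1 ≤ t := by omega
      have hklt : t - 1 < q.length := by omega
      have hdt : ∀ w ∈ p.take (j+1), w ∉ q.take (t-1+1) := by
        intro w hw hw2
        obtain ⟨i, hi, hiw⟩ := mem_take_iff'.1 hw
        obtain ⟨i2, hi2, hiw2⟩ := mem_take_iff'.1 hw2
        by_cases hij : i = j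
        · rw [hij, hjv] at hiw
          have : w = v := (Option.some_inj.1 hiw).symm
          subst this
          exact htmin i2 (by omega) hiw2
        · exact hjmin i w (by omega) hiw ((List.take_sublist _ _).subset hw2)
      have hadjv : M.adj (p[j]'hjlt) (q[t-1]'hklt) := by
        have h1 := List.getElem?_eq_getElem hklt
        have := hqadj (t-1) _ _ h1 (by rw [(by omega : t - 1 + 1 = t)]; exact htv)
        rw [he_pj]
        exact M.adj_symm this
      have hsp := splice hp hq j (t-1) hjlt hklt hdt hadjv
        (fun h1 => by
          have h2 := hpcol j (p[j-1]'(by omega)) (p[j]'hjlt) (p[j+1]'(by omega)) h1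
            (List.getElem?_eq_getElem (by omega)) (List.getElem?_eq_getElem hjlt)
            (List.getElem?_eq_getElem (by omega))
          refine ⟨h2.1, ?_⟩
          have h3 := hqcol t (q[t-1]'hklt) (q[t]'htlt) (q[t+1]'(by omega)) ht1
            (List.getElem?_eq_getElem hklt) (List.getElem?_eq_getElem htlt)
            (List.getElem?_eq_getElem (by omega))
          have := h3.1
          rwa [he_qt, ← he_pj] at this)
        (fun h1 => by
          have h3 := hqcol (t-1) (q[t-1-1]'(by omega)) (q[t-1]'hklt) (q[t-1+1]'(by omega)) h1
            (List.getElem?_eq_getElem (by omega)) (List.getElem?_eq_getElem hklt)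
            (List.getElem?_eq_getElem (by omega))
          refine ⟨h3.1, ?_⟩
          have hx : q[t-1+1]'(by omega) = v := by
            rw [getElem_idx (by omega : t - 1 + 1 = t) htlt]
            exact he_qt
          have := h3.2
          rwa [hx, ← he_pj] at this)
      obtain ⟨hcp, hch, hcl⟩ := hsp
      refine hfin _ hcp (by rw [hch]; exact hph) (by rw [hcl]; exact hqh) ?_
      intro w hw
      rcases List.mem_append.1 hw with h | h
      · exact Or.inl ((List.take_sublist _ _).subset h)
      · exact Or.inr ((List.take_sublist _ _).subset (List.mem_reverse.1 h))
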